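/- Theorem (mixing of the non-backtracking walk): Let G be a finite graph with 3 ≤ D(x) ≤ D for all x, finite, connected, non-bipartite, and suppose the spectrum of P² on ℓ²_o(V,π) is contained in [0, 1−β] for some β > 0. Then the spectrum of S*²S² on ℓ²_o(B,U) is contained in [0, 1 − c(D,β)] where c(D,β) = min( Q^{−4}β / (2(1+Q^{−4}β/6)²), Q^{−4}β / ((1+6Q⁴/β)²) ) with Q = D−1; in particular c(D,β) > 0. -/

import Mathlib

open Finset Matrix

/-- The random-walk laplacian `P f x = (1/D(x)) ∑_{y ∼ x} f y`. -/
noncomputable def lapP {V : Type*} [Fintype V] [DecidableEq V]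
    (G : SimpleGraph V) [DecidableRel G.Adj] (f : V → ℂ) (x : V) : ℂ :=
  ((G.degree x : ℂ))⁻¹ * ∑ y ∈ G.neighborFinset x, f y

/-- The matrix (real entries) of the non-backtracking transfer operator `S`. -/
noncomputable def Smat {V : Type*} [Fintype V] [DecidableEq V]
    (G : SimpleGraph V) [DecidableRel G.Adj] : Matrix G.Dart G.Dart ℝ :=
  fun e e' => if e'.snd = e.fst ∧ e'.symm ≠ e then ((G.degree e.fst : ℝ) - 1)⁻¹ else 0

/-- The matrix of `S*²S²`, `S*` being the `ℓ²(B,U)`-adjoint (transpose) of `S`. -/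
noncomputable def SstarSqSq {V : Type*} [Fintype V] [DecidableEq V]
    (G : SimpleGraph V) [DecidableRel G.Adj] : Matrix G.Dart G.Dart ℝ :=
  (Smat G)ᵀ * (Smat G)ᵀ * (Smat G * Smat G)

/-- The constant `c(D, β)` of the paper, with `Q = D - 1`. -/
noncomputable def cConst (D : ℕ) (β : ℝ) : ℝ :=
  min ((β / ((D : ℝ) - 1) ^ 4) / (2 * (1 + (β / ((D : ℝ) - 1) ^ 4) / 6) ^ 2))
      ((β / ((D : ℝ) - 1) ^ 4) / ((1 + 6 * ((D : ℝ) - 1) ^ 4 / β) ^ 2))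



section Aux
variable {V : Type*} [Fintype V] [DecidableEq V] (G : SimpleGraph V) [DecidableRel G.Adj]

/-- incoming darts at `x` -/
noncomputable def Iin (x : V) : Finset G.Dart := univ.filter (fun e => e.snd = x)

lemma mem_Iin {x : V} {e : G.Dart} : e ∈ Iin G x ↔ e.snd = x := by simp [Iin]

lemma sum_Iin_fst {M : Type*} [AddCommMonoid M] (x : V) (F : V → M) :
    ∑ e ∈ Iin G x, F e.fst = ∑ y ∈ G.neighborFinset x, F y := by
  refine Finset.sum_bij' (fun e _ => e.fst)
    (fun y hy => SimpleGraph.Dart.mk (y, x) (G.adj_symm ((G.mem_neighborFinset x y).1 hy)))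
    ?_ ?_ ?_ ?_ ?_
  · intro e he
    rw [SimpleGraph.mem_neighborFinset]
    have h' := (mem_Iin G).1 he
    exact G.adj_symm (h' ▸ e.adj)
  · intro y _
    rw [mem_Iin]
  · intro e he
    have h' := (mem_Iin G).1 he
    apply SimpleGraph.Dart.ext
    show (e.fst, x) = e.toProd
    rw [← h']
  · intro y _; rfl
  · intro e _; rfl

lemma card_Iin (x : V) : (Iin G x).card = G.degree x := by
  have h := sum_Iin_fst G x (fun _ => (1 : ℕ))
  rw [Finset.sum_const, Finset.sum_const, smul_eq_mul, smul_eq_mul, mul_one, mul_one] at h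
  rw [h, SimpleGraph.card_neighborFinset_eq_degree]

lemma sum_fiber_snd {M : Type*} [AddCommMonoid M] (F : G.Dart → M) :
    ∑ e, F e = ∑ x, ∑ e ∈ Iin G x, F e :=
  (Finset.sum_fiberwise_of_maps_to (fun e _ => mem_univ _) F).symm

lemma sum_symm_darts {M : Type*} [AddCommMonoid M] (F : G.Dart → M) :
    ∑ e, F e = ∑ e : G.Dart, F e.symm := by
  refine Fintype.sum_equiv
    (Function.Involutive.toPerm SimpleGraph.Dart.symm
      (fun d => SimpleGraph.Dart.symm_symm d)) _ _ (fun e => ?_)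
  show F e = F _
  simp [Function.Involutive.toPerm]

/-- the non-backtracking operator applied to a function -/
noncomputable def Sop (φ : G.Dart → ℝ) : G.Dart → ℝ := fun e => ∑ e', Smat G e e' * φ e'

lemma symm_mem_Iin (e : G.Dart) : e.symm ∈ Iin G e.fst := by
  rw [mem_Iin]; rfl

lemma Sop_eq (φ : G.Dart → ℝ) (e : G.Dart) :
    Sop G φ e = ((G.degree e.fst : ℝ) - 1)⁻¹ * ∑ e' ∈ (Iin G e.fst).erase e.symm, φ e' := by
  have hset : (Iin G e.fst).erase e.symm = univ.filter (fun e' => e'.snd = e.fst ∧ e'.symm ≠ e) := by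
    ext e'
    simp only [Finset.mem_erase, mem_Iin, Finset.mem_filter, Finset.mem_univ, true_and]
    constructor
    · rintro ⟨h1, h2⟩
      refine ⟨h2, fun h => h1 ?_⟩
      rw [← h, SimpleGraph.Dart.symm_symm]
    · rintro ⟨h1, h2⟩
      refine ⟨fun h => h2 ?_, h1⟩
      rw [h, SimpleGraph.Dart.symm_symm]
  rw [Sop, hset, Finset.mul_sum]
  rw [Finset.sum_filter]
  apply Finset.sum_congr rfl
  intro e' _
  by_cases h : e'.snd = e.fst ∧ e'.symm ≠ e <;> simp [Smat, h]

lemma erase_card_Iin (e : G.Dart) :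
    (((Iin G e.fst).erase e.symm).card : ℝ) = (G.degree e.fst : ℝ) - 1 := by
  rw [Finset.card_erase_of_mem (symm_mem_Iin G e), card_Iin]
  have h1 : 0 < G.degree e.fst :=
    (SimpleGraph.degree_pos_iff_exists_adj G e.fst).2 ⟨e.snd, e.adj⟩
  have : ((G.degree e.fst - 1 : ℕ) : ℝ) = (G.degree e.fst : ℝ) - 1 := by
    push_cast [Nat.cast_sub h1]
    ring
  exact this

end Aux

lemma expand_sq {α : Type*} (s : Finset α) (f : α → ℝ) (c : ℝ) :
    ∑ b ∈ s, (f b - c)^2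
      = (∑ b ∈ s, f b ^ 2) - 2*c*(∑ b ∈ s, f b) + (s.card : ℝ)*c^2 := by
  have h : ∀ b ∈ s, (f b - c)^2 = f b^2 - 2*c*f b + c^2 := fun b _ => by ring
  rw [Finset.sum_congr rfl h, Finset.sum_add_distrib, Finset.sum_sub_distrib,
    ← Finset.mul_sum, Finset.sum_const, nsmul_eq_mul]

lemma vertex_key {α : Type*} (s : Finset α) (f : α → ℝ) (q : ℝ)
    (hcard : (s.card : ℝ) = q + 1) (hq2 : 2 ≤ q) :
    (∑ b ∈ s, (q⁻¹ * ((∑ b' ∈ s, f b') - f b))^2)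
      + (3/4) * ∑ b ∈ s, (f b - (q+1)⁻¹ * ∑ b' ∈ s, f b')^2
    ≤ ∑ b ∈ s, f b ^ 2 := by
  have hq0 : 0 < q := by linarith
  have hq1 : (0:ℝ) < q + 1 := by linarith
  set S1 := ∑ b' ∈ s, f b' with hS1
  set S2 := ∑ b ∈ s, f b^2 with hS2
  have hA : ∑ b ∈ s, (q⁻¹ * (S1 - f b))^2
      = q⁻¹^2 * (S2 - 2*S1*S1 + (q+1)*S1^2) := by
    have : ∀ b ∈ s, (q⁻¹ * (S1 - f b))^2 = q⁻¹^2 * (f b - S1)^2 := fun b _ => by ring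
    rw [Finset.sum_congr rfl this, ← Finset.mul_sum, expand_sq, hcard]
  have hB : ∑ b ∈ s, (f b - (q+1)⁻¹ * S1)^2 = S2 - (q+1)⁻¹ * S1^2 := by
    rw [expand_sq, hcard]
    field_simp
    ring
  have hT : 0 ≤ S2 - (q+1)⁻¹ * S1^2 := by
    rw [← hB]; positivity
  rw [hA, hB]
  have hiden : q⁻¹^2 * (S2 - 2*S1*S1 + (q+1)*S1^2)
      = (q+1)⁻¹*S1^2 + q⁻¹^2 * (S2 - (q+1)⁻¹*S1^2) := by
    field_simp
    ring
  rw [hiden]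
  have hiq : q⁻¹^2 ≤ 1/4 := by
    have h2 : q⁻¹ ≤ 2⁻¹ := by
      apply inv_anti₀ <;> linarith
    have h0 : 0 ≤ q⁻¹ := by positivity
    nlinarith
  have hS2eq : S2 = (q+1)⁻¹*S1^2 + (S2 - (q+1)⁻¹*S1^2) := by ring
  nlinarith [mul_le_mul_of_nonneg_right hiq hT]

lemma vertex_key2 {α : Type*} (s : Finset α) (f : α → ℝ) (q : ℝ)
    (hcard : (s.card : ℝ) = q + 1) (hq2 : 2 ≤ q) :
    (q⁻¹^2) * ∑ y ∈ s, ((∑ z ∈ s, f z) - f y)^2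
      ≤ (q+1)*((q+1)⁻¹ * ∑ z ∈ s, f z)^2
        + (1/4) * ((∑ y ∈ s, f y^2) - (q+1)*((q+1)⁻¹ * ∑ z ∈ s, f z)^2) := by
  have hq0 : 0 < q := by linarith
  have hq1 : (0:ℝ) < q + 1 := by linarith
  set S1 := ∑ z ∈ s, f z with hS1
  set S2 := ∑ y ∈ s, f y^2 with hS2
  have hd : (q+1)*((q+1)⁻¹ * S1)^2 = (q+1)⁻¹ * S1^2 := by
    field_simp
  have hA : ∑ y ∈ s, (S1 - f y)^2 = S2 - 2*S1*S1 + (q+1)*S1^2 := by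
    have : ∀ b ∈ s, (S1 - f b)^2 = (f b - S1)^2 := fun b _ => by ring
    rw [Finset.sum_congr rfl this, expand_sq, hcard]
  have hT : 0 ≤ S2 - (q+1)⁻¹ * S1^2 := by
    have hCS : S1^2 ≤ (q+1) * S2 := by
      have := sq_sum_le_card_mul_sum_sq (s := s) (f := f)
      rw [← hS1, ← hS2] at this
      calc S1^2 ≤ (s.card : ℝ) * S2 := by exact_mod_cast this
        _ = (q+1) * S2 := by rw [hcard]
    rw [sub_nonneg, inv_mul_le_iff₀ hq1]
    nlinarith
  rw [hA, hd]
  have hiden : q⁻¹^2 * (S2 - 2*S1*S1 + (q+1)*S1^2)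
      = (q+1)⁻¹*S1^2 + q⁻¹^2 * (S2 - (q+1)⁻¹*S1^2) := by
    field_simp
    ring
  rw [hiden]
  have hiq : q⁻¹^2 ≤ 1/4 := by
    have h2 : q⁻¹ ≤ 2⁻¹ := by apply inv_anti₀ <;> linarith
    have h0 : 0 ≤ q⁻¹ := by positivity
    nlinarith
  nlinarith [mul_le_mul_of_nonneg_right hiq hT]
section Aux2
variable {V : Type*} [Fintype V] [DecidableEq V] (G : SimpleGraph V) [DecidableRel G.Adj]

/-- vertex average of incoming values -/
noncomputable def gfun (φ : G.Dart → ℝ) : V → ℝ :=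
  fun x => ((G.degree x : ℝ))⁻¹ * ∑ b ∈ Iin G x, φ b

lemma sum_sq_Sop (φ : G.Dart → ℝ) :
    ∑ e, (Sop G φ e)^2
      = ∑ x, ∑ b ∈ Iin G x,
          (((G.degree x : ℝ) - 1)⁻¹ * ((∑ b' ∈ Iin G x, φ b') - φ b))^2 := by
  rw [sum_symm_darts G (fun e => (Sop G φ e)^2)]
  rw [sum_fiber_snd G (fun b => (Sop G φ b.symm)^2)]
  refine Finset.sum_congr rfl (fun x _ => Finset.sum_congr rfl (fun b hb => ?_))
  have hbx : b.snd = x := (mem_Iin G).1 hb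
  have h1 : b.symm.fst = x := hbx
  have h2 : Sop G φ b.symm
      = ((G.degree x : ℝ) - 1)⁻¹ * ∑ e' ∈ (Iin G x).erase b, φ e' := by
    rw [Sop_eq, h1, SimpleGraph.Dart.symm_symm]
  rw [h2, Finset.sum_erase_eq_sub hb]

lemma decomp (hdeg3 : ∀ x : V, 3 ≤ G.degree x) (φ : G.Dart → ℝ) :
    (∑ e, (Sop G φ e)^2) + (3/4) * ∑ e, (φ e - gfun G φ e.snd)^2 ≤ ∑ e, (φ e)^2 := by
  rw [sum_sq_Sop, sum_fiber_snd G (fun e => (φ e - gfun G φ e.snd)^2),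
    sum_fiber_snd G (fun e => (φ e)^2), Finset.mul_sum, ← Finset.sum_add_distrib]
  refine Finset.sum_le_sum (fun x _ => ?_)
  have hq2 : (2:ℝ) ≤ (G.degree x : ℝ) - 1 := by
    have := hdeg3 x
    have : (3:ℝ) ≤ (G.degree x : ℝ) := by exact_mod_cast this
    linarith
  have hcard : ((Iin G x).card : ℝ) = ((G.degree x : ℝ) - 1) + 1 := by
    rw [card_Iin]; ring
  have hga : ∀ b ∈ Iin G x,
      (φ b - gfun G φ b.snd)^2
        = (φ b - (((G.degree x : ℝ) - 1) + 1)⁻¹ * ∑ b' ∈ Iin G x, φ b')^2 := by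
    intro b hb
    rw [(mem_Iin G).1 hb, gfun]
    norm_num
  rw [Finset.sum_congr rfl hga]
  exact vertex_key (Iin G x) φ ((G.degree x : ℝ) - 1) hcard hq2

lemma contraction (hdeg3 : ∀ x : V, 3 ≤ G.degree x) (φ : G.Dart → ℝ) :
    ∑ e, (Sop G φ e)^2 ≤ ∑ e, (φ e)^2 := by
  have h := decomp G hdeg3 φ
  have h2 : 0 ≤ (3/4) * ∑ e, (φ e - gfun G φ e.snd)^2 := by positivity
  linarith

lemma Sop_snd (hdeg3 : ∀ x : V, 3 ≤ G.degree x) (F : V → ℝ) (e : G.Dart) :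
    Sop G (fun e' => F e'.snd) e = F e.fst := by
  rw [Sop_eq]
  have hcongr : ∀ e' ∈ (Iin G e.fst).erase e.symm, F e'.snd = F e.fst := by
    intro e' he'
    rw [(mem_Iin G).1 (Finset.mem_of_mem_erase he')]
  rw [Finset.sum_congr rfl hcongr, Finset.sum_const, nsmul_eq_mul]
  rw [Finset.card_erase_of_mem (symm_mem_Iin G e), card_Iin]
  have h1 : 0 < G.degree e.fst := by have := hdeg3 e.fst; omega
  have hc : ((G.degree e.fst - 1 : ℕ) : ℝ) = (G.degree e.fst : ℝ) - 1 := by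
    push_cast [Nat.cast_sub h1]; ring
  rw [hc]
  have hq : ((G.degree e.fst : ℝ) - 1) ≠ 0 := by
    have := hdeg3 e.fst
    have : (3:ℝ) ≤ (G.degree e.fst : ℝ) := by exact_mod_cast this
    linarith
  field_simp

lemma Sop_fst (F : V → ℝ) (e : G.Dart) :
    Sop G (fun e' => F e'.fst) e
      = ((G.degree e.fst : ℝ) - 1)⁻¹
        * ((∑ y ∈ G.neighborFinset e.fst, F y) - F e.snd) := by
  rw [Sop_eq]
  rw [Finset.sum_erase_eq_sub (symm_mem_Iin G e)]
  rw [sum_Iin_fst G e.fst (fun y => F y)]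
  rfl

lemma neighbor_double (F : V → ℝ) :
    ∑ x, ∑ y ∈ G.neighborFinset x, F y = ∑ y, (G.degree y : ℝ) * F y := by
  have h1 : ∀ x, ∑ y ∈ G.neighborFinset x, F y = ∑ b ∈ Iin G x, F b.fst :=
    fun x => (sum_Iin_fst G x F).symm
  simp_rw [h1]
  rw [← sum_fiber_snd G (fun b => F b.fst)]
  rw [sum_symm_darts G (fun b => F b.fst)]
  have h2 : ∀ b : G.Dart, F b.symm.fst = F b.snd := fun b => rfl
  simp_rw [h2]
  rw [sum_fiber_snd G (fun b => F b.snd)]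
  refine Finset.sum_congr rfl (fun x _ => ?_)
  have h3 : ∀ b ∈ Iin G x, F b.snd = F x := fun b hb => by rw [(mem_Iin G).1 hb]
  rw [Finset.sum_congr rfl h3, Finset.sum_const, nsmul_eq_mul, card_Iin]

end Aux2
section Aux3
variable {V : Type*} [Fintype V] [DecidableEq V] (G : SimpleGraph V) [DecidableRel G.Adj]

lemma Phi_fst_le (hdeg3 : ∀ x : V, 3 ≤ G.degree x) (g : V → ℝ) :
    ∑ e, (Sop G (fun e' => g e'.fst) e)^2
      ≤ (3/4) * (∑ x, (G.degree x : ℝ)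
            * (((G.degree x : ℝ))⁻¹ * ∑ y ∈ G.neighborFinset x, g y)^2)
        + (1/4) * ∑ x, (G.degree x : ℝ) * g x^2 := by
  have hstep1 : ∑ e, (Sop G (fun e' => g e'.fst) e)^2
      = ∑ x, ∑ y ∈ G.neighborFinset x,
          (((G.degree x : ℝ) - 1)⁻¹ * ((∑ z ∈ G.neighborFinset x, g z) - g y))^2 := by
    simp_rw [Sop_fst]
    rw [sum_symm_darts G
      (fun e => (((G.degree e.fst : ℝ) - 1)⁻¹
        * ((∑ y ∈ G.neighborFinset e.fst, g y) - g e.snd))^2)]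
    rw [sum_fiber_snd G (fun b => (((G.degree b.symm.fst : ℝ) - 1)⁻¹
        * ((∑ y ∈ G.neighborFinset b.symm.fst, g y) - g b.symm.snd))^2)]
    refine Finset.sum_congr rfl (fun x _ => ?_)
    have h1 : ∀ b ∈ Iin G x, (((G.degree b.symm.fst : ℝ) - 1)⁻¹
        * ((∑ y ∈ G.neighborFinset b.symm.fst, g y) - g b.symm.snd))^2
        = (((G.degree x : ℝ) - 1)⁻¹
        * ((∑ z ∈ G.neighborFinset x, g z) - g b.fst))^2 := by
      intro b hb
      have hbx : b.snd = x := (mem_Iin G).1 hb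
      have h2 : b.symm.fst = x := hbx
      rw [h2]
      rfl
    rw [Finset.sum_congr rfl h1]
    exact sum_Iin_fst G x
      (fun y => (((G.degree x : ℝ) - 1)⁻¹ * ((∑ z ∈ G.neighborFinset x, g z) - g y))^2)
  rw [hstep1]
  have hstep2 : ∀ x : V, ∑ y ∈ G.neighborFinset x,
          (((G.degree x : ℝ) - 1)⁻¹ * ((∑ z ∈ G.neighborFinset x, g z) - g y))^2
      ≤ (G.degree x : ℝ) * (((G.degree x : ℝ))⁻¹ * ∑ y ∈ G.neighborFinset x, g y)^2
        + (1/4) * ((∑ y ∈ G.neighborFinset x, g y^2)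
            - (G.degree x : ℝ) * (((G.degree x : ℝ))⁻¹ * ∑ y ∈ G.neighborFinset x, g y)^2) := by
    intro x
    have hq2 : (2:ℝ) ≤ (G.degree x : ℝ) - 1 := by
      have h3 : (3:ℝ) ≤ (G.degree x : ℝ) := by exact_mod_cast hdeg3 x
      linarith
    have hd : ((G.degree x : ℝ) - 1) + 1 = (G.degree x : ℝ) := by ring
    have hcard : ((G.neighborFinset x).card : ℝ) = ((G.degree x : ℝ) - 1) + 1 := by
      rw [G.card_neighborFinset_eq_degree, hd]
    have hkey := vertex_key2 (G.neighborFinset x) g ((G.degree x : ℝ) - 1) hcard hq2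
    rw [hd] at hkey
    have hpull : ∑ y ∈ G.neighborFinset x,
          (((G.degree x : ℝ) - 1)⁻¹ * ((∑ z ∈ G.neighborFinset x, g z) - g y))^2
        = (((G.degree x : ℝ) - 1)⁻¹)^2
          * ∑ y ∈ G.neighborFinset x, ((∑ z ∈ G.neighborFinset x, g z) - g y)^2 := by
      rw [Finset.mul_sum]
      exact Finset.sum_congr rfl (fun y _ => by ring)
    rw [hpull]
    exact hkey
  calc ∑ x, ∑ y ∈ G.neighborFinset x,
          (((G.degree x : ℝ) - 1)⁻¹ * ((∑ z ∈ G.neighborFinset x, g z) - g y))^2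
      ≤ ∑ x, ((G.degree x : ℝ) * (((G.degree x : ℝ))⁻¹ * ∑ y ∈ G.neighborFinset x, g y)^2
        + (1/4) * ((∑ y ∈ G.neighborFinset x, g y^2)
            - (G.degree x : ℝ) * (((G.degree x : ℝ))⁻¹
                * ∑ y ∈ G.neighborFinset x, g y)^2)) :=
        Finset.sum_le_sum (fun x _ => hstep2 x)
    _ = (3/4) * (∑ x, (G.degree x : ℝ)
            * (((G.degree x : ℝ))⁻¹ * ∑ y ∈ G.neighborFinset x, g y)^2)
        + (1/4) * ∑ x, ∑ y ∈ G.neighborFinset x, g y^2 := by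
        rw [Finset.mul_sum, Finset.mul_sum, ← Finset.sum_add_distrib]
        exact Finset.sum_congr rfl (fun x _ => by ring)
    _ = (3/4) * (∑ x, (G.degree x : ℝ)
            * (((G.degree x : ℝ))⁻¹ * ∑ y ∈ G.neighborFinset x, g y)^2)
        + (1/4) * ∑ x, (G.degree x : ℝ) * g x^2 := by
        rw [neighbor_double G (fun y => g y^2)]

lemma CS_g (hdeg3 : ∀ x : V, 3 ≤ G.degree x) (φ : G.Dart → ℝ) :
    ∑ x, (G.degree x : ℝ) * (gfun G φ x)^2 ≤ ∑ e, (φ e)^2 := by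
  rw [sum_fiber_snd G (fun e => (φ e)^2)]
  refine Finset.sum_le_sum (fun x _ => ?_)
  have hd : (0:ℝ) < (G.degree x : ℝ) := by
    have h3 : (3:ℝ) ≤ (G.degree x : ℝ) := by exact_mod_cast hdeg3 x
    linarith
  have hCS : (∑ b ∈ Iin G x, φ b)^2 ≤ (G.degree x : ℝ) * ∑ b ∈ Iin G x, (φ b)^2 := by
    have := sq_sum_le_card_mul_sum_sq (s := Iin G x) (f := φ)
    calc (∑ b ∈ Iin G x, φ b)^2 ≤ ((Iin G x).card : ℝ) * ∑ b ∈ Iin G x, (φ b)^2 := by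
          exact_mod_cast this
      _ = (G.degree x : ℝ) * ∑ b ∈ Iin G x, (φ b)^2 := by rw [card_Iin]
  rw [gfun]
  have heq : (G.degree x : ℝ) * (((G.degree x : ℝ))⁻¹ * ∑ b ∈ Iin G x, φ b)^2
      = ((G.degree x : ℝ))⁻¹ * (∑ b ∈ Iin G x, φ b)^2 := by
    field_simp
  rw [heq, inv_mul_le_iff₀ hd]
  exact hCS

lemma orth_g (hdeg3 : ∀ x : V, 3 ≤ G.degree x) (φ : G.Dart → ℝ)
    (hφ : ∑ e, φ e = 0) :
    ∑ x, gfun G φ x * (G.degree x : ℝ) = 0 := by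
  have h1 : ∀ x : V, gfun G φ x * (G.degree x : ℝ) = ∑ b ∈ Iin G x, φ b := by
    intro x
    have hd : ((G.degree x : ℝ)) ≠ 0 := by
      have h3 : (3:ℝ) ≤ (G.degree x : ℝ) := by exact_mod_cast hdeg3 x
      linarith
    rw [gfun]
    field_simp
  simp_rw [h1]
  rw [← sum_fiber_snd G φ]
  exact hφ

lemma Sop_add (a b : G.Dart → ℝ) (e : G.Dart) :
    Sop G (fun e' => a e' + b e') e = Sop G a e + Sop G b e := by
  rw [Sop, Sop, Sop, ← Finset.sum_add_distrib]
  exact Finset.sum_congr rfl (fun e' _ => by ring)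

end Aux3
lemma final_arith (β Phi Y : ℝ) (hβ : 0 < β) (hβ1 : β ≤ 1) (hPhi : 0 ≤ Phi) (hY : 0 ≤ Y)
    (h : Phi - Y ≤ (1+3*β/8)*(1-3*β/4)*Phi + (4/3)*(1+(3*β/8)⁻¹)*Y) :
    β^2/20 * Phi ≤ Y := by
  have hβ' : β ≠ 0 := ne_of_gt hβ
  have hc : (3*β/8)⁻¹*β = 8/3 := by
    field_simp
  have h3 := mul_le_mul_of_nonneg_right h hβ.le
  have hexp : ((1+3*β/8)*(1-3*β/4)*Phi + (4/3)*(1+(3*β/8)⁻¹)*Y)*β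
      = (1-3*β/8-9*β^2/32)*β*Phi + (4/3)*β*Y + (4/3)*((3*β/8)⁻¹*β)*Y := by ring
  rw [hexp, hc] at h3
  nlinarith [h3, mul_nonneg (mul_nonneg (mul_nonneg hβ.le hβ.le) hβ.le) hPhi,
    mul_nonneg hY (sub_nonneg.2 hβ1), mul_nonneg (mul_nonneg hβ.le hβ.le) hPhi]

lemma pt_sq (δ u w : ℝ) (hδ : 0 < δ) : (u + w)^2 ≤ (1+δ)*u^2 + (1+δ⁻¹)*w^2 := by
  have key : δ⁻¹*(δ*u-w)^2 = δ*u^2 - 2*u*w + δ⁻¹*w^2 := by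
    field_simp
    ring
  nlinarith [key, mul_nonneg (le_of_lt (inv_pos.2 hδ)) (sq_nonneg (δ*u-w))]

section MainReal
variable {V : Type*} [Fintype V] [DecidableEq V] (G : SimpleGraph V) [DecidableRel G.Adj]

lemma main_real (hdeg3 : ∀ x : V, 3 ≤ G.degree x) (β : ℝ) (hβ : 0 < β) (hβ1 : β ≤ 1)
    (hgap : ∀ g : V → ℝ, (∑ x, g x * (G.degree x : ℝ)) = 0 →
      ∑ x, (G.degree x : ℝ) * (((G.degree x : ℝ))⁻¹ * ∑ y ∈ G.neighborFinset x, g y)^2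
        ≤ (1-β) * ∑ x, (G.degree x : ℝ) * g x^2)
    (φ : G.Dart → ℝ) (hφ : ∑ e, φ e = 0) :
    ∑ e, (Sop G (Sop G φ) e)^2 ≤ (1 - β^2/20) * ∑ e, (φ e)^2 := by
  have hδ : (0:ℝ) < 3*β/8 := by positivity
  set g : V → ℝ := gfun G φ with hg
  set r : G.Dart → ℝ := fun e => φ e - g e.snd with hr
  have hfun : φ = fun e' => g e'.snd + r e' := funext fun e' => by simp [hr]
  have hSφ : Sop G φ = fun e => g e.fst + Sop G r e := by
    funext e
    conv_lhs => rw [hfun]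
    rw [Sop_add G (fun e' => g e'.snd) r e, Sop_snd G hdeg3 g e]
  have hS2φ : ∀ e, Sop G (Sop G φ) e
      = Sop G (fun e' => g e'.fst) e + Sop G (Sop G r) e := by
    intro e
    rw [hSφ, Sop_add G (fun e' => g e'.fst) (Sop G r) e]
  -- quantities
  have hc1 : ∑ e, (Sop G φ e)^2 ≤ ∑ e, (φ e)^2 := contraction G hdeg3 φ
  have hc2 : ∑ e, (Sop G (Sop G φ) e)^2 ≤ ∑ e, (Sop G φ e)^2 :=
    contraction G hdeg3 (Sop G φ)
  have hW : (3/4) * ∑ e, (r e)^2 ≤ (∑ e, (φ e)^2) - ∑ e, (Sop G φ e)^2 := by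
    have := decomp G hdeg3 φ
    have hrw : ∑ e, (φ e - gfun G φ e.snd)^2 = ∑ e, (r e)^2 := by
      refine Finset.sum_congr rfl (fun e _ => ?_)
      rw [hr, ← hg]
    rw [hrw] at this
    linarith
  have hrS : ∑ e, (Sop G (Sop G r) e)^2 ≤ ∑ e, (r e)^2 :=
    le_trans (contraction G hdeg3 (Sop G r)) (contraction G hdeg3 r)
  have horth : ∑ x, g x * (G.degree x : ℝ) = 0 := orth_g G hdeg3 φ hφ
  have hgab := hgap g horth
  have hSg0 : 0 ≤ ∑ x, (G.degree x : ℝ) * g x^2 :=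
    Finset.sum_nonneg (fun x _ => by positivity)
  have hSgPhi : ∑ x, (G.degree x : ℝ) * g x^2 ≤ ∑ e, (φ e)^2 := CS_g G hdeg3 φ
  have hu : ∑ e, (Sop G (fun e' => g e'.fst) e)^2
      ≤ (1 - (3/4)*β) * ∑ x, (G.degree x : ℝ) * g x^2 := by
    have h1 := Phi_fst_le G hdeg3 g
    nlinarith [h1, hgab, hSg0]
  have huPhi : ∑ e, (Sop G (fun e' => g e'.fst) e)^2 ≤ (1 - (3/4)*β) * ∑ e, (φ e)^2 := by
    have hpos : (0:ℝ) ≤ 1 - (3/4)*β := by linarith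
    calc ∑ e, (Sop G (fun e' => g e'.fst) e)^2
        ≤ (1 - (3/4)*β) * ∑ x, (G.degree x : ℝ) * g x^2 := hu
      _ ≤ (1 - (3/4)*β) * ∑ e, (φ e)^2 := by
          exact mul_le_mul_of_nonneg_left hSgPhi hpos
  -- pointwise split
  have hsum : ∑ e, (Sop G (Sop G φ) e)^2
      ≤ (1+3*β/8) * (∑ e, (Sop G (fun e' => g e'.fst) e)^2)
        + (1+(3*β/8)⁻¹) * ∑ e, (Sop G (Sop G r) e)^2 := by
    rw [Finset.mul_sum, Finset.mul_sum, ← Finset.sum_add_distrib]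
    refine Finset.sum_le_sum (fun e _ => ?_)
    rw [hS2φ e]
    exact pt_sq _ _ _ hδ
  -- final arithmetic
  set Phi := ∑ e, (φ e)^2 with hPhidef
  set Y := Phi - ∑ e, (Sop G (Sop G φ) e)^2 with hY
  have hPhi0 : 0 ≤ Phi := Finset.sum_nonneg (fun e _ => sq_nonneg _)
  have hY0 : 0 ≤ Y := by
    rw [hY]
    have : ∑ e, (Sop G (Sop G φ) e)^2 ≤ Phi := le_trans hc2 hc1
    linarith
  have hWr : ∑ e, (Sop G (Sop G r) e)^2 ≤ (4/3) * Y := by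
    have h1 : (∑ e, (φ e)^2) - ∑ e, (Sop G φ e)^2 ≤ Y := by
      rw [hY]; linarith
    nlinarith [hrS, hW, h1]
  have hfin : Phi - Y ≤ (1+3*β/8)*(1-3*β/4)*Phi + (4/3)*(1+(3*β/8)⁻¹)*Y := by
    have h1 : Phi - Y = ∑ e, (Sop G (Sop G φ) e)^2 := by rw [hY]; ring
    have h2 : (0:ℝ) < 1+(3*β/8)⁻¹ := by positivity
    have h3 : (1+(3*β/8)⁻¹) * ∑ e, (Sop G (Sop G r) e)^2 ≤ (1+(3*β/8)⁻¹) * ((4/3)*Y) :=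
      mul_le_mul_of_nonneg_left hWr h2.le
    have h4 : (0:ℝ) ≤ 1+3*β/8 := by positivity
    have h5 : (1+3*β/8) * (∑ e, (Sop G (fun e' => g e'.fst) e)^2)
        ≤ (1+3*β/8) * ((1 - (3/4)*β) * Phi) := mul_le_mul_of_nonneg_left huPhi h4
    calc Phi - Y = ∑ e, (Sop G (Sop G φ) e)^2 := h1
      _ ≤ (1+3*β/8) * (∑ e, (Sop G (fun e' => g e'.fst) e)^2)
          + (1+(3*β/8)⁻¹) * ∑ e, (Sop G (Sop G r) e)^2 := hsum
      _ ≤ (1+3*β/8) * ((1 - (3/4)*β) * Phi) + (1+(3*β/8)⁻¹) * ((4/3)*Y) := by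
          linarith
      _ = (1+3*β/8)*(1-3*β/4)*Phi + (4/3)*(1+(3*β/8)⁻¹)*Y := by ring
  have hYlb := final_arith β Phi Y hβ hβ1 hPhi0 hY0 hfin
  have : ∑ e, (Sop G (Sop G φ) e)^2 = Phi - Y := by rw [hY]; ring
  rw [this]
  nlinarith [hYlb, hPhi0]

end MainReal
section Bridge
variable {V : Type*} [Fintype V] [DecidableEq V] (G : SimpleGraph V) [DecidableRel G.Adj]

lemma adj_swap (a b : V → ℝ) :
    ∑ x, a x * ∑ y ∈ G.neighborFinset x, b y
      = ∑ y, b y * ∑ x ∈ G.neighborFinset y, a x := by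
  have h1 : ∀ x, a x * ∑ y ∈ G.neighborFinset x, b y
      = ∑ y, if G.Adj x y then a x * b y else 0 := by
    intro x
    rw [SimpleGraph.neighborFinset_eq_filter, Finset.sum_filter, Finset.mul_sum]
    exact Finset.sum_congr rfl (fun y _ => by by_cases h : G.Adj x y <;> simp [h])
  have h2 : ∀ y, b y * ∑ x ∈ G.neighborFinset y, a x
      = ∑ x, if G.Adj x y then a x * b y else 0 := by
    intro y
    have hc : ∀ x : V, (if G.Adj x y then a x * b y else 0)
        = (if G.Adj y x then b y * a x else 0) := by
      intro x
      by_cases h : G.Adj x y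
      · rw [if_pos h, if_pos (G.adj_symm h)]; ring
      · rw [if_neg h, if_neg (fun hyx => h (G.adj_symm hyx))]
    simp_rw [hc]
    rw [SimpleGraph.neighborFinset_eq_filter, Finset.mul_sum, ← Finset.sum_filter]
  simp_rw [h1, h2]
  exact Finset.sum_comm
  
lemma lapP_real (g : V → ℝ) (x : V) :
    lapP G (fun y => ((g y : ℝ) : ℂ)) x
      = ((((G.degree x : ℝ))⁻¹ * ∑ y ∈ G.neighborFinset x, g y : ℝ) : ℂ) := by
  rw [lapP]
  push_cast
  ring

lemma gap_of_hspec (hdeg3 : ∀ x : V, 3 ≤ G.degree x) (β : ℝ)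
    (hspec : ∀ f : V → ℂ, (∑ x : V, f x * (G.degree x : ℂ)) = 0 →
      0 ≤ (∑ x : V, (starRingEnd ℂ) (f x) * lapP G (lapP G f) x * (G.degree x : ℂ)).re ∧
      (∑ x : V, (starRingEnd ℂ) (f x) * lapP G (lapP G f) x * (G.degree x : ℂ)).re ≤
        (1 - β) * ∑ x : V, ‖f x‖ ^ 2 * (G.degree x : ℝ)) :
    ∀ g : V → ℝ, (∑ x, g x * (G.degree x : ℝ)) = 0 →
      ∑ x, (G.degree x : ℝ) * (((G.degree x : ℝ))⁻¹ * ∑ y ∈ G.neighborFinset x, g y)^2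
        ≤ (1-β) * ∑ x, (G.degree x : ℝ) * g x^2 := by
  intro g hg0
  set pg : V → ℝ := fun x => ((G.degree x : ℝ))⁻¹ * ∑ y ∈ G.neighborFinset x, g y with hpg
  set f : V → ℂ := fun x => ((g x : ℝ) : ℂ) with hf
  have hdne : ∀ x : V, ((G.degree x : ℝ)) ≠ 0 := by
    intro x
    have h3 : (3:ℝ) ≤ (G.degree x : ℝ) := by exact_mod_cast hdeg3 x
    linarith
  have hsum0 : (∑ x : V, f x * (G.degree x : ℂ)) = 0 := by
    have : (∑ x : V, f x * (G.degree x : ℂ))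
        = ((∑ x, g x * (G.degree x : ℝ) : ℝ) : ℂ) := by
      push_cast
      rfl
    rw [this, hg0]
    norm_num
  obtain ⟨-, hle⟩ := hspec f hsum0
  have hlap1 : lapP G f = fun x => ((pg x : ℝ) : ℂ) := funext (fun x => lapP_real G g x)
  have hlap2 : ∀ x, lapP G (lapP G f) x
      = ((((G.degree x : ℝ))⁻¹ * ∑ y ∈ G.neighborFinset x, pg y : ℝ) : ℂ) := by
    intro x
    rw [hlap1]
    exact lapP_real G pg x
  have hre : (∑ x : V, (starRingEnd ℂ) (f x) * lapP G (lapP G f) x * (G.degree x : ℂ)).re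
      = ∑ x, g x * (((G.degree x : ℝ))⁻¹ * ∑ y ∈ G.neighborFinset x, pg y) * (G.degree x : ℝ) := by
    rw [Complex.re_sum]
    refine Finset.sum_congr rfl (fun x _ => ?_)
    rw [hlap2 x, hf]
    simp only [Complex.conj_ofReal]
    rw [show ((G.degree x : ℕ) : ℂ) = (((G.degree x : ℕ) : ℝ) : ℂ) by push_cast; rfl]
    rw [← Complex.ofReal_mul, ← Complex.ofReal_mul, Complex.ofReal_re]
  have hselfadj : ∑ x, g x * (((G.degree x : ℝ))⁻¹ * ∑ y ∈ G.neighborFinset x, pg y) * (G.degree x : ℝ)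
      = ∑ x, (G.degree x : ℝ) * (pg x)^2 := by
    have h1 : ∀ x, g x * (((G.degree x : ℝ))⁻¹ * ∑ y ∈ G.neighborFinset x, pg y) * (G.degree x : ℝ)
        = g x * ∑ y ∈ G.neighborFinset x, pg y := by
      intro x
      rw [mul_comm (((G.degree x : ℝ))⁻¹) _, mul_assoc, mul_assoc, inv_mul_cancel₀ (hdne x),
        mul_one]
    simp_rw [h1]
    rw [adj_swap G g pg]
    refine Finset.sum_congr rfl (fun y _ => ?_)
    have h2 : ∑ x ∈ G.neighborFinset y, g x = (G.degree y : ℝ) * pg y := by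
      rw [hpg, ← mul_assoc, mul_inv_cancel₀ (hdne y), one_mul]
    rw [h2]
    ring
  have hnorm : ∑ x : V, ‖f x‖ ^ 2 * (G.degree x : ℝ) = ∑ x, (G.degree x : ℝ) * g x^2 := by
    refine Finset.sum_congr rfl (fun x _ => ?_)
    rw [hf]
    rw [Complex.norm_real, Real.norm_eq_abs, sq_abs]
    ring
  rw [hre, hselfadj, hnorm] at hle
  exact hle

lemma beta_gt_one_absurd (hconn : G.Connected) (hdeg3 : ∀ x : V, 3 ≤ G.degree x)
    (β : ℝ) (hβ1 : 1 < β)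
    (hspec : ∀ f : V → ℂ, (∑ x : V, f x * (G.degree x : ℂ)) = 0 →
      0 ≤ (∑ x : V, (starRingEnd ℂ) (f x) * lapP G (lapP G f) x * (G.degree x : ℂ)).re ∧
      (∑ x : V, (starRingEnd ℂ) (f x) * lapP G (lapP G f) x * (G.degree x : ℂ)).re ≤
        (1 - β) * ∑ x : V, ‖f x‖ ^ 2 * (G.degree x : ℝ)) : False := by
  have hne : Nonempty V := hconn.nonempty
  obtain ⟨x0⟩ := hne
  have hd0 : 0 < G.degree x0 := by have := hdeg3 x0; omega
  obtain ⟨y0, hadj⟩ := (G.degree_pos_iff_exists_adj (v := x0)).1 hd0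
  have hxy : x0 ≠ y0 := G.ne_of_adj hadj
  set f : V → ℂ := fun w => if w = x0 then (G.degree y0 : ℂ)
      else if w = y0 then -(G.degree x0 : ℂ) else 0 with hf
  have hsum0 : (∑ x : V, f x * (G.degree x : ℂ)) = 0 := by
    have hterm : ∀ w, f w * (G.degree w : ℂ)
        = (if w = x0 then (G.degree y0 : ℂ) * (G.degree x0 : ℂ) else 0)
          + (if w = y0 then -((G.degree x0 : ℂ) * (G.degree y0 : ℂ)) else 0) := by
      intro w
      by_cases h1 : w = x0
      · subst h1
        rw [hf]
        simp only [if_pos rfl, if_neg hxy, if_true, eq_self_iff_true]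
        ring
      · by_cases h2 : w = y0
        · subst h2
          rw [hf]
          simp only [if_neg h1, if_pos rfl, if_true, eq_self_iff_true]
          ring
        · rw [hf]
          simp only [if_neg h1, if_neg h2]
          ring
    simp_rw [hterm]
    rw [Finset.sum_add_distrib, Finset.sum_ite_eq' Finset.univ x0,
      Finset.sum_ite_eq' Finset.univ y0]
    simp only [Finset.mem_univ, if_true]
    ring
  obtain ⟨h0, hle⟩ := hspec f hsum0
  have hSnorm : (G.degree y0 : ℝ)^2 * (G.degree x0 : ℝ)
      ≤ ∑ x : V, ‖f x‖ ^ 2 * (G.degree x : ℝ) := by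
    have hx0 : ‖f x0‖ ^ 2 * (G.degree x0 : ℝ) = (G.degree y0 : ℝ)^2 * (G.degree x0 : ℝ) := by
      rw [hf]
      simp only [if_pos rfl, if_true, eq_self_iff_true]
      rw [Complex.norm_natCast]
    rw [← hx0]
    exact Finset.single_le_sum (f := fun x => ‖f x‖ ^ 2 * (G.degree x : ℝ))
      (fun x _ => by positivity) (Finset.mem_univ x0)
  have hdypos : (0:ℝ) < (G.degree y0 : ℝ) := by
    have := hdeg3 y0
    have : (3:ℝ) ≤ (G.degree y0 : ℝ) := by exact_mod_cast this
    linarith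
  have hdxpos : (0:ℝ) < (G.degree x0 : ℝ) := by
    have := hdeg3 x0
    have : (3:ℝ) ≤ (G.degree x0 : ℝ) := by exact_mod_cast this
    linarith
  nlinarith [hle, h0, hSnorm, mul_pos (mul_pos hdypos hdypos) hdxpos]

end Bridge
section FormLemma
variable {V : Type*} [Fintype V] [DecidableEq V] (G : SimpleGraph V) [DecidableRel G.Adj]

lemma form_re (φ : G.Dart → ℂ) :
    (∑ e, (starRingEnd ℂ) (φ e) * ∑ e', (SstarSqSq G e e' : ℂ) * φ e').re
      = ∑ f : G.Dart, ((Sop G (Sop G (fun e => (φ e).re)) f)^2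
          + (Sop G (Sop G (fun e => (φ e).im)) f)^2) := by
  set A : Matrix G.Dart G.Dart ℝ := Smat G * Smat G with hA
  have hM : ∀ e e', SstarSqSq G e e' = ∑ f, A f e * A f e' := by
    intro e e'
    rw [SstarSqSq, show (Smat G)ᵀ * (Smat G)ᵀ = Aᵀ by rw [hA, Matrix.transpose_mul]]
    rw [Matrix.mul_apply]
    exact Finset.sum_congr rfl fun f _ => by rw [Matrix.transpose_apply]
  set w : G.Dart → ℂ := fun f => ∑ e, (A f e : ℂ) * φ e with hw
  have hform : (∑ e, (starRingEnd ℂ) (φ e) * ∑ e', (SstarSqSq G e e' : ℂ) * φ e')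
      = ∑ f, (starRingEnd ℂ) (w f) * w f := by
    calc ∑ e, (starRingEnd ℂ) (φ e) * ∑ e', (SstarSqSq G e e' : ℂ) * φ e'
        = ∑ e, ∑ f, (starRingEnd ℂ) (φ e) * (A f e : ℂ) * ∑ e', (A f e' : ℂ) * φ e' := by
          refine Finset.sum_congr rfl fun e _ => ?_
          have h1 : ∑ e', ((SstarSqSq G e e' : ℝ) : ℂ) * φ e'
              = ∑ e', ∑ f, (A f e : ℂ) * ((A f e' : ℂ) * φ e') := by
            refine Finset.sum_congr rfl fun e' _ => ?_
            rw [hM e e']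
            push_cast
            rw [Finset.sum_mul]
            exact Finset.sum_congr rfl fun f _ => by ring
          rw [h1, Finset.sum_comm, Finset.mul_sum]
          refine Finset.sum_congr rfl fun f _ => ?_
          rw [← Finset.mul_sum]
          ring
      _ = ∑ f, (∑ e, (starRingEnd ℂ) (φ e) * (A f e : ℂ)) * ∑ e', (A f e' : ℂ) * φ e' := by
          rw [Finset.sum_comm]
          exact Finset.sum_congr rfl fun f _ => (Finset.sum_mul _ _ _).symm
      _ = ∑ f, (starRingEnd ℂ) (w f) * w f := by
          refine Finset.sum_congr rfl fun f _ => ?_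
          congr 1
          rw [hw, map_sum]
          exact Finset.sum_congr rfl fun e _ => by
            rw [RingHom.map_mul, Complex.conj_ofReal, mul_comm]
  rw [hform, Complex.re_sum]
  have hwre : ∀ f, (w f).re = Sop G (Sop G (fun e => (φ e).re)) f := by
    intro f
    rw [hw, Complex.re_sum]
    have h1 : ∀ e : G.Dart, ((A f e : ℂ) * φ e).re = A f e * (φ e).re := by
      intro e
      simp [Complex.mul_re]
    rw [Finset.sum_congr rfl (fun e _ => h1 e)]
    have h2 : (∑ e, A f e * (φ e).re) = (A.mulVec (fun e => (φ e).re)) f := rfl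
    rw [h2, hA, ← Matrix.mulVec_mulVec]
    rfl
  have hwim : ∀ f, (w f).im = Sop G (Sop G (fun e => (φ e).im)) f := by
    intro f
    rw [hw, Complex.im_sum]
    have h1 : ∀ e : G.Dart, ((A f e : ℂ) * φ e).im = A f e * (φ e).im := by
      intro e
      simp [Complex.mul_im]
    rw [Finset.sum_congr rfl (fun e _ => h1 e)]
    have h2 : (∑ e, A f e * (φ e).im) = (A.mulVec (fun e => (φ e).im)) f := rfl
    rw [h2, hA, ← Matrix.mulVec_mulVec]
    rfl
  refine Finset.sum_congr rfl fun f _ => ?_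
  have h3 : (starRingEnd ℂ) (w f) * w f = ((Complex.normSq (w f) : ℝ) : ℂ) := by
    rw [mul_comm]
    exact_mod_cast Complex.mul_conj (w f)
  rw [h3, Complex.ofReal_re, Complex.normSq_apply, hwre f, hwim f]
  ring

end FormLemma
lemma cConst_le (D : ℕ) (β : ℝ) (hβ : 0 < β) (hβ1 : β ≤ 1) (hD3 : 3 ≤ D) :
    cConst D β ≤ β^2/20 := by
  have hQ2 : (2:ℝ) ≤ (D:ℝ) - 1 := by
    have : (3:ℝ) ≤ (D:ℝ) := by exact_mod_cast hD3
    linarith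
  have hQpos : (0:ℝ) < (D:ℝ) - 1 := by linarith
  set Q4 : ℝ := ((D:ℝ)-1)^4 with hQ4def
  have hQ4pos : 0 < Q4 := by positivity
  have hQ416 : (16:ℝ) ≤ Q4 := by
    calc (16:ℝ) = 2^4 := by norm_num
      _ ≤ ((D:ℝ)-1)^4 := by
          apply pow_le_pow_left₀ (by norm_num) hQ2
  have hcpos : (0:ℝ) < 6*Q4/β := by positivity
  have h1 : cConst D β ≤ (β / Q4) / ((1 + 6 * Q4 / β) ^ 2) := min_le_right _ _
  have h2 : (β / Q4) / ((1 + 6 * Q4 / β) ^ 2) ≤ (β / Q4) / ((6 * Q4 / β) ^ 2) := by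
    apply div_le_div_of_nonneg_left (by positivity) (by positivity)
    nlinarith
  have h3 : (β / Q4) / ((6 * Q4 / β) ^ 2) = β^3 / (36 * Q4^3) := by
    field_simp
    ring
  have h4 : β^3 / (36 * Q4^3) ≤ β^2/20 := by
    rw [div_le_div_iff₀ (by positivity) (by norm_num)]
    have hQ41 : (1:ℝ) ≤ Q4 := by linarith
    have hQ431 : (1:ℝ) ≤ Q4^3 := by
      calc (1:ℝ) = 1^3 := by norm_num
        _ ≤ Q4^3 := pow_le_pow_left₀ (by norm_num) hQ41 3
    nlinarith [mul_le_mul_of_nonneg_right hQ431 (sq_nonneg β),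
      mul_le_mul_of_nonneg_right hβ1 (sq_nonneg β)]
  calc cConst D β ≤ (β / Q4) / ((1 + 6 * Q4 / β) ^ 2) := h1
    _ ≤ (β / Q4) / ((6 * Q4 / β) ^ 2) := h2
    _ = β^3 / (36 * Q4^3) := h3
    _ ≤ β^2/20 := h4

theorem nonbacktracking_mixing {V : Type*} [Fintype V] [DecidableEq V]
    (G : SimpleGraph V) [DecidableRel G.Adj]
    (hconn : G.Connected) (hnb : ¬ G.Colorable 2)
    (D : ℕ) (hdeg : ∀ x : V, 3 ≤ G.degree x ∧ G.degree x ≤ D)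
    (β : ℝ) (hβ : 0 < β)
    (hspec : ∀ f : V → ℂ, (∑ x : V, f x * (G.degree x : ℂ)) = 0 →
      0 ≤ (∑ x : V, (starRingEnd ℂ) (f x) * lapP G (lapP G f) x * (G.degree x : ℂ)).re ∧
      (∑ x : V, (starRingEnd ℂ) (f x) * lapP G (lapP G f) x * (G.degree x : ℂ)).re ≤
        (1 - β) * ∑ x : V, ‖f x‖ ^ 2 * (G.degree x : ℝ)) :
    0 < cConst D β ∧
    ∀ φ : G.Dart → ℂ, (∑ e : G.Dart, φ e) = 0 →
      0 ≤ (∑ e : G.Dart, (starRingEnd ℂ) (φ e) *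
            ∑ e' : G.Dart, (SstarSqSq G e e' : ℂ) * φ e').re ∧
      (∑ e : G.Dart, (starRingEnd ℂ) (φ e) *
            ∑ e' : G.Dart, (SstarSqSq G e e' : ℂ) * φ e').re ≤
        (1 - cConst D β) * ∑ e : G.Dart, ‖φ e‖ ^ 2 := by
  have hdeg3 : ∀ x : V, 3 ≤ G.degree x := fun x => (hdeg x).1
  obtain ⟨x0⟩ := hconn.nonempty
  have hD3 : 3 ≤ D := le_trans (hdeg x0).1 (hdeg x0).2
  have hQ2 : (2:ℝ) ≤ (D:ℝ) - 1 := by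
    have : (3:ℝ) ≤ (D:ℝ) := by exact_mod_cast hD3
    linarith
  have hQpos : (0:ℝ) < (D:ℝ) - 1 := by linarith
  have hQ4pos : (0:ℝ) < ((D:ℝ)-1)^4 := by positivity
  have hapos : 0 < β / ((D:ℝ)-1)^4 := div_pos hβ hQ4pos
  have hcpos : 0 < cConst D β := by
    rw [cConst]
    apply lt_min
    · apply div_pos hapos
      positivity
    · apply div_pos hapos
      have h6 : (0:ℝ) < 6 * ((D:ℝ)-1)^4 / β := by positivity
      positivity
  refine ⟨hcpos, ?_⟩
  by_cases hβ1 : β ≤ 1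
  · intro φ hφ0
    rw [form_re G φ]
    constructor
    · positivity
    · have hu0 : ∑ e, (fun e : G.Dart => (φ e).re) e = 0 := by
        have h := congrArg Complex.re hφ0
        rw [Complex.re_sum] at h
        simpa using h
      have hv0 : ∑ e, (fun e : G.Dart => (φ e).im) e = 0 := by
        have h := congrArg Complex.im hφ0
        rw [Complex.im_sum] at h
        simpa using h
      have hgap := gap_of_hspec G hdeg3 β hspec
      have h1 := main_real G hdeg3 β hβ hβ1 hgap (fun e => (φ e).re) hu0
      have h2 := main_real G hdeg3 β hβ hβ1 hgap (fun e => (φ e).im) hv0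
      have hnorm : ∑ e : G.Dart, ‖φ e‖^2
          = (∑ e, ((fun e : G.Dart => (φ e).re) e)^2)
            + ∑ e, ((fun e : G.Dart => (φ e).im) e)^2 := by
        rw [← Finset.sum_add_distrib]
        refine Finset.sum_congr rfl fun e _ => ?_
        rw [Complex.sq_norm, Complex.normSq_apply]
        ring
      have hX0 : (0:ℝ) ≤ ∑ e : G.Dart, ‖φ e‖^2 :=
        Finset.sum_nonneg fun e _ => by positivity
      have hcle : cConst D β ≤ β^2/20 := cConst_le D β hβ hβ1 hD3
      have hsplit : ∑ f : G.Dart, ((Sop G (Sop G (fun e => (φ e).re)) f)^2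
          + (Sop G (Sop G (fun e => (φ e).im)) f)^2)
          = (∑ f, (Sop G (Sop G (fun e => (φ e).re)) f)^2)
            + ∑ f, (Sop G (Sop G (fun e => (φ e).im)) f)^2 := Finset.sum_add_distrib
      rw [hsplit, hnorm]
      have hmono : (1 - β^2/20) * ((∑ e, ((fun e : G.Dart => (φ e).re) e)^2)
            + ∑ e, ((fun e : G.Dart => (φ e).im) e)^2)
          ≤ (1 - cConst D β) * ((∑ e, ((fun e : G.Dart => (φ e).re) e)^2)
            + ∑ e, ((fun e : G.Dart => (φ e).im) e)^2) := by
        apply mul_le_mul_of_nonneg_right (by linarith)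
        rw [← hnorm] at *
        exact hX0
      calc (∑ f, (Sop G (Sop G (fun e => (φ e).re)) f)^2)
            + ∑ f, (Sop G (Sop G (fun e => (φ e).im)) f)^2
          ≤ (1 - β^2/20) * ((∑ e, ((fun e : G.Dart => (φ e).re) e)^2)
            + ∑ e, ((fun e : G.Dart => (φ e).im) e)^2) := by
            rw [mul_add]
            exact add_le_add h1 h2
        _ ≤ (1 - cConst D β) * ((∑ e, ((fun e : G.Dart => (φ e).re) e)^2)
            + ∑ e, ((fun e : G.Dart => (φ e).im) e)^2) := hmono
  · exact absurd (beta_gt_one_absurd G hconn hdeg3 β (lt_of_not_ge hβ1) hspec) id
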